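/- Let p be an odd prime, let l be an integer coprime to 2p, and set q = exp(lπi/p), a primitive 2p-th root of unity in ℂ. For an integer j let [j]_q = (q^j − q^{−j})/(q − q^{−1}) denote the quantum integer. Then for every integer m with 0 ≤ m ≤ (p−3)/2, the quantum integer [2m+1]_q is nonzero and there exists a field automorphism σ of ℂ such that σ([2j+1]_q) = [(2j+1)(2m+1)]_q / [2m+1]_q for all integers j with 0 ≤ j ≤ (p−3)/2. -/

import Mathlib

/-- The quantum integer `[j]_q = (q^j - q^{-j})/(q - q⁻¹)`. -/
noncomputable def qint (q : ℂ) (j : ℤ) : ℂ := (q ^ j - q ^ (-j)) / (q - q⁻¹)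

open Cardinal in
theorem exists_ringEquiv_comp_eq {k K L : Type} [Field k] [Field K] [Field L]
    [IsAlgClosed K] [IsAlgClosed L]
    (hk : #k ≤ ℵ₀) (hK : ℵ₀ < #K) (hKL : #K = #L)
    (f : k →+* K) (g : k →+* L) : ∃ σ : K ≃+* L, ∀ x, σ (f x) = g x := by
  letI : Algebra k K := f.toAlgebra
  letI : Algebra k L := g.toAlgebra
  obtain ⟨ι, v, hv⟩ := (haveI : FaithfulSMul k K := (faithfulSMul_iff_algebraMap_injective k K).mpr f.injective
    exists_isTranscendenceBasis' k K)
  obtain ⟨κ, w, hw⟩ := (haveI : FaithfulSMul k L := (faithfulSMul_iff_algebraMap_injective k L).mpr g.injective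
    exists_isTranscendenceBasis' k L)
  have hι : #K = #ι :=
    Cardinal.lift_inj.mp (IsAlgClosed.cardinal_eq_cardinal_transcendence_basis_of_aleph0_lt v hv hk hK)
  have hκ : #L = #κ :=
    Cardinal.lift_inj.mp (IsAlgClosed.cardinal_eq_cardinal_transcendence_basis_of_aleph0_lt w hw hk (hKL ▸ hK))
  obtain ⟨e⟩ := Cardinal.eq.mp ((hι.symm.trans hKL).trans hκ)
  letI := IsAlgClosed.isAlgClosure_of_transcendence_basis v hv
  letI := IsAlgClosed.isAlgClosure_of_transcendence_basis w hw
  let E : Algebra.adjoin k (Set.range v) ≃ₐ[k] Algebra.adjoin k (Set.range w) :=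
    hv.1.aevalEquiv.symm.trans ((MvPolynomial.renameEquiv k e).trans hw.1.aevalEquiv)
  refine ⟨IsAlgClosure.equivOfEquiv K L E.toRingEquiv, fun x => ?_⟩
  rw [show f x = algebraMap k K x from rfl,
    IsScalarTower.algebraMap_apply k (Algebra.adjoin k (Set.range v)) K x,
    IsAlgClosure.equivOfEquiv_algebraMap]
  show algebraMap _ L (E (algebraMap k _ x)) = g x
  rw [AlgEquiv.commutes, ← IsScalarTower.algebraMap_apply]
  rfl


set_option synthInstance.maxHeartbeats 1000000 in
/-- Let `p` be an odd prime, `l` coprime to `2p`, and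
`q = exp(lπi/p)` (a primitive `2p`-th root of unity).  Then for every `0 ≤ m ≤ (p-3)/2`
the quantum integer `[2m+1]_q` is nonzero and there is a field automorphism `σ` of `ℂ` with
`σ([2j+1]_q) = [(2j+1)(2m+1)]_q / [2m+1]_q` for all `0 ≤ j ≤ (p-3)/2`. -/
theorem galois_transitivity_quantum_integers_sl2
    (p : ℕ) (hp : p.Prime) (hodd : Odd p) (l : ℤ)
    (hl : IsCoprime l (2 * (p : ℤ))) :
    ∀ m : ℕ, m ≤ (p - 3) / 2 →
      qint (Complex.exp ((l : ℂ) * (Real.pi : ℂ) * Complex.I / (p : ℂ))) (2 * (m : ℤ) + 1) ≠ 0 ∧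
      ∃ σ : ℂ ≃+* ℂ, ∀ j : ℕ, j ≤ (p - 3) / 2 →
        σ (qint (Complex.exp ((l : ℂ) * (Real.pi : ℂ) * Complex.I / (p : ℂ))) (2 * (j : ℤ) + 1)) =
          qint (Complex.exp ((l : ℂ) * (Real.pi : ℂ) * Complex.I / (p : ℂ)))
              ((2 * (j : ℤ) + 1) * (2 * (m : ℤ) + 1)) /
            qint (Complex.exp ((l : ℂ) * (Real.pi : ℂ) * Complex.I / (p : ℂ))) (2 * (m : ℤ) + 1) := by
  intro m hm
  have hp2 : p % 2 = 1 := Nat.odd_iff.mp hodd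
  have hp3 : 3 ≤ p := by
    have := hp.two_le
    rcases Nat.lt_or_ge p 3 with h | h
    · interval_cases p <;> omega
    · exact h
  have hmp : 2 * m + 1 < p := by omega
  set q : ℂ := Complex.exp ((l : ℂ) * (Real.pi : ℂ) * Complex.I / (p : ℂ)) with hqdef
  have hq0 : q ≠ 0 := Complex.exp_ne_zero _
  have hp0 : (p : ℂ) ≠ 0 := Nat.cast_ne_zero.mpr hp.pos.ne'
  -- q is a primitive 2p-th root of unity
  have hζ : IsPrimitiveRoot (Complex.exp (2 * Real.pi * Complex.I / ((2 * p : ℕ) : ℂ))) (2 * p) :=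
    Complex.isPrimitiveRoot_exp (2 * p) (by positivity)
  have hqζ : q = Complex.exp (2 * Real.pi * Complex.I / ((2 * p : ℕ) : ℂ)) ^ l := by
    rw [hqdef, ← Complex.exp_int_mul]
    congr 1
    push_cast
    field_simp
  have hgcd : l.gcd ((2 * p : ℕ) : ℤ) = 1 := by
    have := Int.isCoprime_iff_gcd_eq_one.mp hl
    rwa [show ((2 * p : ℕ) : ℤ) = 2 * (p : ℤ) by push_cast; ring]
  have hq : IsPrimitiveRoot q (2 * p) := by
    rw [hqζ]
    exact hζ.zpow_of_gcd_eq_one l hgcd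
  -- key divisibility fact
  have hpow : ∀ a : ℤ, q ^ a - q ^ (-a) = 0 → (p : ℤ) ∣ a := by
    intro a ha
    have h1 : q ^ a = q ^ (-a) := sub_eq_zero.mp ha
    have h2 : q ^ (2 * a) = 1 := by
      rw [two_mul, zpow_add₀ hq0]
      nth_rewrite 2 [h1]
      rw [← zpow_add₀ hq0]
      simp
    have h3 : ((2 * p : ℕ) : ℤ) ∣ 2 * a := (hq.zpow_eq_one_iff_dvd _).mp h2
    obtain ⟨c, hc⟩ := h3
    refine ⟨c, ?_⟩
    push_cast at hc
    linarith
  have hden : q - q⁻¹ ≠ 0 := by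
    intro h
    have h1 : q ^ (1 : ℤ) - q ^ (-(1 : ℤ)) = 0 := by
      rw [zpow_one, zpow_neg, zpow_one]; exact h
    have h2 := hpow 1 h1
    have := Int.le_of_dvd one_pos h2
    omega
  have hkden : q ^ (2 * (m : ℤ) + 1) - q ^ (-(2 * (m : ℤ) + 1)) ≠ 0 := by
    intro h
    have := hpow _ h
    have h1 : (p : ℤ) ≤ 2 * (m : ℤ) + 1 := Int.le_of_dvd (by positivity) this
    have : (2 * m + 1 : ℤ) < p := by exact_mod_cast hmp
    omega
  have hknz : qint q (2 * (m : ℤ) + 1) ≠ 0 :=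
    div_ne_zero hkden hden
  refine ⟨hknz, ?_⟩
  -- Galois automorphism of the algebraic numbers
  set Qbar := algebraicClosure ℚ ℂ with hQbar
  have hqalg : q ∈ Qbar := by
    rw [mem_algebraicClosure_iff]
    refine ⟨Polynomial.X ^ (2 * p) - 1, ?_, ?_⟩
    · intro h
      have := congrArg (Polynomial.eval 0) h
      simp [zero_pow (by positivity : 2 * p ≠ 0)] at this
    · simp [hq.pow_eq_one]
  set x : Qbar := ⟨q, hqalg⟩ with hxdef
  set y : Qbar := x ^ (2 * (m : ℤ) + 1) with hydef
  have hyq : (y : ℂ) = q ^ (2 * (m : ℤ) + 1) := by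
    rw [hydef]; push_cast; rfl
  have hxprim : IsPrimitiveRoot x (2 * p) :=
    hq.of_map_of_injective (f := Qbar.val.toRingHom) Subtype.val_injective
  have hcop : Nat.Coprime (2 * m + 1) (2 * p) := by
    refine Nat.Coprime.mul_right ?_ ?_
    · exact Nat.coprime_two_right.mpr (by exact ⟨m, by ring⟩)
    · rw [Nat.coprime_comm]
      exact (Nat.Prime.coprime_iff_not_dvd hp).mpr fun h => by
        have := Nat.le_of_dvd (by omega) h; omega
  have hyprim : IsPrimitiveRoot y (2 * p) := by
    rw [hydef]
    refine hxprim.zpow_of_gcd_eq_one _ ?_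
    rw [show (2 * (m : ℤ) + 1) = ((2 * m + 1 : ℕ) : ℤ) by push_cast; ring]
    exact_mod_cast hcop
  have hmin : minpoly ℚ x = Polynomial.cyclotomic (2 * p) ℚ :=
    (Polynomial.cyclotomic_eq_minpoly_rat hxprim (by positivity)).symm
  have hev : Polynomial.aeval y (minpoly ℚ x) = 0 := by
    rw [hmin, Polynomial.aeval_def, Polynomial.eval₂_eq_eval_map, Polynomial.map_cyclotomic]
    exact hyprim.isRoot_cyclotomic (by positivity)
  have hxalg : IsAlgebraic ℚ x := (algebraicClosure.isAlgebraic ℚ ℂ).isAlgebraic x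
  haveI : IsAlgClosure ℚ Qbar := algebraicClosure.isAlgClosure ℚ ℂ
  obtain ⟨τ, hτ⟩ := minpoly.exists_algEquiv_of_root' hxalg hev
  -- extend to ℂ
  have hk : Cardinal.mk Qbar ≤ Cardinal.aleph0 := by
    have h1 := Algebra.IsAlgebraic.cardinalMk_le_max ℚ Qbar
    simpa [Cardinal.mkRat] using h1
  have hK : Cardinal.aleph0 < Cardinal.mk ℂ := by
    rw [Cardinal.mk_complex]; exact Cardinal.aleph0_lt_continuum
  obtain ⟨σ, hσ⟩ := exists_ringEquiv_comp_eq hk hK rfl (algebraMap Qbar ℂ)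
    ((algebraMap Qbar ℂ).comp τ.toAlgHom.toRingHom)
  have hσq : σ q = q ^ (2 * (m : ℤ) + 1) := by
    have := hσ x
    simp only [RingHom.coe_comp, Function.comp_apply] at this
    rw [show (algebraMap Qbar ℂ) x = q from rfl] at this
    rw [this, show (τ.toAlgHom.toRingHom : Qbar →+* Qbar) x = τ x from rfl, hτ]
    exact hyq
  refine ⟨σ, fun j hj => ?_⟩
  set n : ℤ := 2 * (j : ℤ) + 1 with hndef
  set k : ℤ := 2 * (m : ℤ) + 1 with hkdef
  have e1 : (q ^ k) ^ n = q ^ (n * k) := by rw [← zpow_mul, mul_comm]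
  have e2 : (q ^ k) ^ (-n) = q ^ (-(n * k)) := by rw [← zpow_mul]; congr 1; ring
  have e3 : (q ^ k)⁻¹ = q ^ (-k) := by rw [← zpow_neg, zpow_neg]
  simp only [qint]
  rw [map_div₀, map_sub, map_sub, map_zpow₀, map_zpow₀, map_inv₀, hσq, e1, e2, e3,
    div_div_div_cancel_right₀ hden]
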